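/- Let h : [n'] → [m] be drawn from a pairwise independent hash family and p a probability distribution on [n']. Then E_h[||h(p)||_2^2] = 1/m + (1 − 1/m)||p||_2^2, where h(p)_i = Σ_{j: h(j)=i} p_j. -/

import Mathlib

open Finset

/-- Let `h : [n'] → [m]` be drawn from a pairwise independent hash family (any `k ≤ 2`
distinct inputs receive independent uniform values) and `p` a probability distribution on
`[n']`. Then `E_h[‖h(p)‖₂²] = 1/m + (1 − 1/m)‖p‖₂²`, where `h(p)ᵢ = ∑_{j : h(j)=i} pⱼ`. -/
theorem expectation_hashed_distribution_sq_norm (n' m : ℕ) (hm : 0 < m)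
    (ν : (Fin n' → Fin m) → ℝ) (hν : ∀ h, 0 ≤ ν h) (hν1 : ∑ h, ν h = 1)
    (hindep : ∀ (k : ℕ), k ≤ 2 → ∀ (j : Fin k → Fin n'), Function.Injective j →
      ∀ (u : Fin k → Fin m),
        (∑ h, if (∀ i, h (j i) = u i) then ν h else 0) = (1 / (m : ℝ)) ^ k)
    (p : Fin n' → ℝ) (hp : ∀ j, 0 ≤ p j) (hp1 : ∑ j, p j = 1) :
    ∑ h, ν h * (∑ i : Fin m, (∑ j ∈ Finset.univ.filter (fun j => h j = i), p j) ^ 2)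
      = 1 / (m : ℝ) + (1 - 1 / (m : ℝ)) * ∑ j, (p j) ^ 2 := by
  have hmR : (0:ℝ) < m := by exact_mod_cast hm
  -- Step 1: expand the square into a double sum over pairs
  have step1 : ∀ h : Fin n' → Fin m,
      (∑ i : Fin m, (∑ j ∈ Finset.univ.filter (fun j => h j = i), p j) ^ 2)
      = ∑ j1, ∑ j2, p j1 * p j2 * (if h j1 = h j2 then (1:ℝ) else 0) := by
    intro h
    have hfil : ∀ i : Fin m, (∑ j ∈ Finset.univ.filter (fun j => h j = i), p j)
        = ∑ j, if h j = i then p j else 0 := fun i => by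
      rw [Finset.sum_filter]
    calc ∑ i : Fin m, (∑ j ∈ univ.filter (fun j => h j = i), p j) ^ 2
        = ∑ i : Fin m, ∑ j1, ∑ j2,
            (if h j1 = i then p j1 else 0) * (if h j2 = i then p j2 else 0) := by
          simp_rw [hfil, sq, Finset.sum_mul_sum]
      _ = ∑ j1, ∑ j2, ∑ i : Fin m,
            (if h j1 = i then p j1 else 0) * (if h j2 = i then p j2 else 0) := by
          rw [Finset.sum_comm]
          refine Finset.sum_congr rfl fun j1 _ => ?_
          rw [Finset.sum_comm]
      _ = ∑ j1, ∑ j2, p j1 * p j2 * (if h j1 = h j2 then (1:ℝ) else 0) := by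
          refine Finset.sum_congr rfl fun j1 _ => Finset.sum_congr rfl fun j2 _ => ?_
          rw [Finset.sum_eq_single (h j1)]
          · by_cases hh : h j1 = h j2 <;> simp [hh, eq_comm] <;> ring
          · intro i _ hi
            simp [Ne.symm hi]
          · simp
  -- the probability that two indices collide
  have hQdiag : ∀ j : Fin n', (∑ h, ν h * (if h j = h j then (1:ℝ) else 0)) = 1 := by
    intro j; simp [hν1]
  have hQoff : ∀ j1 j2 : Fin n', j1 ≠ j2 →
      (∑ h, ν h * (if h j1 = h j2 then (1:ℝ) else 0)) = 1 / m := by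
    intro j1 j2 hne
    calc ∑ h, ν h * (if h j1 = h j2 then (1:ℝ) else 0)
        = ∑ h, ∑ u : Fin m, if h j1 = u ∧ h j2 = u then ν h else 0 := by
          refine Finset.sum_congr rfl fun h _ => ?_
          by_cases hh : h j1 = h j2
          · rw [Finset.sum_eq_single (h j1)]
            · simp [hh]
            · intro u _ hu
              simp [Ne.symm hu]
            · simp
          · have hnever : ∀ u : Fin m, ¬ (h j1 = u ∧ h j2 = u) := by
              rintro u ⟨a, b⟩; exact hh (a.trans b.symm)
            simp [hh, hnever]
      _ = ∑ u : Fin m, ∑ h, if h j1 = u ∧ h j2 = u then ν h else 0 := Finset.sum_comm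
      _ = ∑ u : Fin m, (1 / (m:ℝ)) ^ 2 := by
          refine Finset.sum_congr rfl fun u _ => ?_
          have hinj : Function.Injective ![j1, j2] := by
            intro a b hab
            fin_cases a <;> fin_cases b <;> simp_all
          have := hindep 2 le_rfl ![j1, j2] hinj ![u, u]
          simpa [Fin.forall_fin_two] using this
      _ = 1 / m := by
          rw [Finset.sum_const, Finset.card_univ, Fintype.card_fin]
          field_simp
          rw [nsmul_eq_mul, ← mul_assoc, ← sq, mul_one_div_cancel (pow_ne_zero 2 hmR.ne')]
  -- assemble
  have main : (∑ h, ν h * (∑ i : Fin m,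
      (∑ j ∈ Finset.univ.filter (fun j => h j = i), p j) ^ 2))
      = ∑ j1, ∑ j2, p j1 * p j2 * (∑ h, ν h * (if h j1 = h j2 then (1:ℝ) else 0)) := by
    simp_rw [step1, Finset.mul_sum]
    rw [Finset.sum_comm]
    refine Finset.sum_congr rfl fun j1 _ => ?_
    rw [Finset.sum_comm]
    refine Finset.sum_congr rfl fun j2 _ => ?_
    refine Finset.sum_congr rfl fun h _ => ?_
    ring
  rw [main]
  have split : ∀ j1 : Fin n',
      (∑ j2, p j1 * p j2 * (∑ h, ν h * (if h j1 = h j2 then (1:ℝ) else 0)))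
      = p j1 ^ 2 + (1 / m) * (p j1 * (1 - p j1)) := by
    intro j1
    rw [← Finset.add_sum_erase _ _ (Finset.mem_univ j1), hQdiag]
    have herase : ∀ j2 ∈ Finset.univ.erase j1,
        p j1 * p j2 * (∑ h, ν h * (if h j1 = h j2 then (1:ℝ) else 0))
        = (1 / m) * (p j1 * p j2) := by
      intro j2 hj2
      rw [hQoff j1 j2 (Ne.symm (Finset.ne_of_mem_erase hj2))]
      ring
    rw [Finset.sum_congr rfl herase, ← Finset.mul_sum]
    have : ∑ j2 ∈ Finset.univ.erase j1, p j1 * p j2 = p j1 * (1 - p j1) := by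
      rw [← Finset.mul_sum]
      congr 1
      have := Finset.add_sum_erase Finset.univ p (Finset.mem_univ j1)
      rw [hp1] at this
      linarith
    rw [this]; ring
  rw [Finset.sum_congr rfl fun j1 _ => split j1, Finset.sum_add_distrib, ← Finset.mul_sum]
  have h1 : ∑ j1, p j1 * (1 - p j1) = 1 - ∑ j, p j ^ 2 := by
    simp_rw [mul_sub, mul_one, Finset.sum_sub_distrib, hp1, sq]
  rw [h1]
  ring
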